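/- (Hamiltonian of the untwisted Givental field, Faber–Pandharipande form.) Fix an integer d ≥ 1 and let M be the operator of multiplication by (B_{d+1}/(d+1)!) z^d on ℋ = H((z⁻¹)), where B_{d+1} is the (d+1)st Bernoulli number. Then for every f ∈ ℋ: (1/2) ω(Mf, f) = (B_{d+1}/(d+1)!) [ − Σ_{a≥0, μ} q_a^μ(f) p_{a+d, μ}(f) + (1/2) Σ_{a+a'=d−1, a,a'≥0, μ, μ'} (−1)^{a'} g^{μμ'} p_{a,μ}(f) p_{a',μ'}(f) ]. -/

import Mathlib

noncomputable section

/-- `f : ℤ → H` has coefficients vanishing for all sufficiently large `k`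
(finitely many positive powers of `z`). -/
def IsGivental {H : Type*} [AddCommGroup H] [Module ℚ H] (f : ℤ → H) : Prop :=
  ∃ N : ℤ, ∀ k : ℤ, N < k → f k = 0

/-- Givental's symplectic form `ω(f₁, f₂) = Σ_{k∈ℤ} (−1)^k g(f₁_k, f₂_{−1−k})`. -/
def giventalForm {H : Type*} [AddCommGroup H] [Module ℚ H]
    (g : H →ₗ[ℚ] H →ₗ[ℚ] ℚ) (f₁ f₂ : ℤ → H) : ℚ :=
  ∑ᶠ k : ℤ, (-1 : ℚ) ^ k * g (f₁ k) (f₂ (-1 - k))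

/-- The Darboux coordinate `q_a^μ(f)`: the `h_μ`-coordinate of the coefficient `f_a`. -/
def qCoord {H : Type*} [AddCommGroup H] [Module ℚ H] {ι : Type*}
    (b : Module.Basis ι ℚ H) (f : ℤ → H) (a : ℕ) (μ : ι) : ℚ :=
  b.repr (f a) μ

/-- The Darboux coordinate `p_{a,μ}(f) = (−1)^{a+1} g(f_{−1−a}, h_μ)`. -/
def pCoord {H : Type*} [AddCommGroup H] [Module ℚ H] {ι : Type*}
    (g : H →ₗ[ℚ] H →ₗ[ℚ] ℚ) (b : Module.Basis ι ℚ H) (f : ℤ → H) (a : ℕ) (μ : ι) : ℚ :=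
  (-1 : ℚ) ^ (a + 1) * g (f (-1 - a)) (b μ)

/-- Multiplication by `(B_{d+1}/(d+1)!) z^d` on `ℋ`, where `B_{d+1}` is the
`(d+1)`st Bernoulli number. -/
def giventalUntwistedField {H : Type*} [AddCommGroup H] [Module ℚ H]
    (d : ℕ) (f : ℤ → H) : ℤ → H :=
  fun k => (bernoulli (d + 1) / (Nat.factorial (d + 1) : ℚ)) • f (k - d)

lemma auxA {H : Type*} [AddCommGroup H] [Module ℚ H] {ι : Type*} [Fintype ι]
    (g : H →ₗ[ℚ] H →ₗ[ℚ] ℚ) (b : Module.Basis ι ℚ H) (u v : H) :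
    ∑ μ, (b.repr u) μ * g v (b μ) = g v u := by
  conv_rhs => rw [← b.sum_repr u]
  rw [map_sum]
  exact Finset.sum_congr rfl fun μ _ => by rw [map_smul, smul_eq_mul]

lemma auxDet {H : Type*} [AddCommGroup H] [Module ℚ H] {ι : Type*} [Fintype ι] [DecidableEq ι]
    (g : H →ₗ[ℚ] H →ₗ[ℚ] ℚ)
    (hsymm : ∀ u v : H, g u v = g v u)
    (hnondeg : ∀ u : H, (∀ v : H, g u v = 0) → u = 0)
    (b : Module.Basis ι ℚ H) :
    (Matrix.of fun μ μ' => g (b μ) (b μ')).det ≠ 0 := by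
  intro h0
  obtain ⟨v, hv, hmv⟩ := Matrix.exists_mulVec_eq_zero_iff.mpr h0
  set u := ∑ μ, v μ • b μ with hu_def
  have hu : ∀ μ, g (b μ) u = 0 := by
    intro μ
    have h1 := congrFun hmv μ
    simp only [Matrix.mulVec, dotProduct, Matrix.of_apply, Pi.zero_apply] at h1
    rw [hu_def, map_sum]
    simpa [map_smul, smul_eq_mul, mul_comm] using h1
  have hu0 : u = 0 := by
    apply hnondeg
    intro w
    rw [← b.sum_repr w, map_sum]
    simp only [map_smul, smul_eq_mul]
    exact Finset.sum_eq_zero fun μ _ => by rw [hsymm u (b μ), hu μ, mul_zero]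
  apply hv
  funext μ
  have h2 := congrArg (fun x => b.repr x μ) hu0
  simpa [hu_def, b.repr_sum_self, Finsupp.single_apply] using h2

lemma auxB {H : Type*} [AddCommGroup H] [Module ℚ H] {ι : Type*} [Fintype ι] [DecidableEq ι]
    (g : H →ₗ[ℚ] H →ₗ[ℚ] ℚ)
    (hsymm : ∀ u v : H, g u v = g v u)
    (b : Module.Basis ι ℚ H) (G : Matrix ι ι ℚ)
    (hG : G = Matrix.of fun μ μ' => g (b μ) (b μ'))
    (hinv : G⁻¹ * G = 1) (u v : H) :
    ∑ μ, ∑ μ', G⁻¹ μ μ' * g u (b μ) * g v (b μ') = g u v := by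
  have hGv : ∀ μ' : ι, g v (b μ') = ∑ ν, G μ' ν * (b.repr v) ν := by
    intro μ'
    rw [hsymm v (b μ'), ← auxA g b v (b μ')]
    exact Finset.sum_congr rfl fun ν _ => by rw [hG]; simp [Matrix.of_apply, mul_comm]
  have inner : ∀ μ : ι, ∑ μ', G⁻¹ μ μ' * g v (b μ') = (b.repr v) μ := by
    intro μ
    calc ∑ μ', G⁻¹ μ μ' * g v (b μ')
        = ∑ μ', ∑ ν, G⁻¹ μ μ' * G μ' ν * (b.repr v) ν := by
          simp only [hGv, Finset.mul_sum, mul_assoc]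
      _ = ∑ ν, (∑ μ', G⁻¹ μ μ' * G μ' ν) * (b.repr v) ν := by
          rw [Finset.sum_comm]
          simp [Finset.sum_mul]
      _ = ∑ ν, (1 : Matrix ι ι ℚ) μ ν * (b.repr v) ν := by
          simp only [← Matrix.mul_apply, hinv]
      _ = (b.repr v) μ := by simp [Matrix.one_apply]
  calc ∑ μ, ∑ μ', G⁻¹ μ μ' * g u (b μ) * g v (b μ')
      = ∑ μ, g u (b μ) * ∑ μ', G⁻¹ μ μ' * g v (b μ') := by
        refine Finset.sum_congr rfl fun μ _ => ?_
        rw [Finset.mul_sum]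
        exact Finset.sum_congr rfl fun μ' _ => by ring
    _ = ∑ μ, g u (b μ) * (b.repr v) μ := by simp [inner]
    _ = g u v := by
        rw [← auxA g b v u]
        exact Finset.sum_congr rfl fun μ _ => mul_comm _ _

lemma aux_inv_neg_one_pow (m : ℕ) : ((-1:ℚ)^m)⁻¹ = (-1)^m := by
  rcases Nat.even_or_odd m with h|h
  · rw [h.neg_one_pow]; norm_num
  · rw [h.neg_one_pow]; norm_num

lemma aux_zpow_neg_one (a : ℕ) : (-1:ℚ) ^ (-1 - (a:ℤ)) = (-1:ℚ) ^ (a+1) := by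
  rw [show (-1 - (a:ℤ)) = -(((a+1:ℕ):ℤ)) by push_cast; ring, zpow_neg, zpow_natCast,
    aux_inv_neg_one_pow]

/-- The Hamiltonian of the untwisted Givental field (Faber–Pandharipande form):
`(1/2) ω(Mf, f) = (B_{d+1}/(d+1)!) [ − Σ_{a,μ} q_a^μ p_{a+d,μ}
  + (1/2) Σ_{a+a'=d−1,μ,μ'} (−1)^{a'} g^{μμ'} p_{a,μ} p_{a',μ'} ]`. -/
theorem giventalUntwistedField_hamiltonian {H : Type*} [AddCommGroup H] [Module ℚ H]
    [FiniteDimensional ℚ H] {ι : Type*} [Fintype ι] [DecidableEq ι]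
    (g : H →ₗ[ℚ] H →ₗ[ℚ] ℚ)
    (hsymm : ∀ u v : H, g u v = g v u)
    (hnondeg : ∀ u : H, (∀ v : H, g u v = 0) → u = 0)
    (b : Module.Basis ι ℚ H)
    (d : ℕ) (hd : 1 ≤ d)
    (f : ℤ → H) (hf : IsGivental f) :
    letI G : Matrix ι ι ℚ := Matrix.of fun μ μ' => g (b μ) (b μ')
    (1 / 2 : ℚ) * giventalForm g (giventalUntwistedField d f) f =
      (bernoulli (d + 1) / (Nat.factorial (d + 1) : ℚ)) *
        (-(∑ᶠ a : ℕ, ∑ μ : ι, qCoord b f a μ * pCoord g b f (a + d) μ) +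
          (1 / 2 : ℚ) * ∑ a ∈ Finset.range d, ∑ μ : ι, ∑ μ' : ι,
            (-1 : ℚ) ^ (d - 1 - a) * (G⁻¹ μ μ') *
              pCoord g b f a μ * pCoord g b f (d - 1 - a) μ') := by
  set G : Matrix ι ι ℚ := Matrix.of fun μ μ' => g (b μ) (b μ') with hGdef
  obtain ⟨N, hN⟩ := hf
  set n : ℕ := N.toNat with hn
  have hfn : ∀ k : ℤ, (n:ℤ) < k → f k = 0 := fun k hk =>
    hN k (lt_of_le_of_lt (Int.self_le_toNat N) hk)
  set c : ℚ := bernoulli (d + 1) / (Nat.factorial (d + 1) : ℚ) with hc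
  set φ : ℤ → ℚ := fun k => (-1:ℚ) ^ k * g (f (k - d)) (f (-1 - k)) with hφ
  set s₁ : Finset ℤ := (Finset.range (n+1)).image (fun a : ℕ => (-1:ℤ) - a) with hs₁def
  set s₂ : Finset ℤ := (Finset.range d).image (fun a : ℕ => (a:ℤ)) with hs₂def
  set s₃ : Finset ℤ := (Finset.range (n+1)).image (fun a : ℕ => (a:ℤ) + d) with hs₃def
  have hm₁ : ∀ k ∈ s₁, k < 0 := by
    intro k hk; simp only [hs₁def, Finset.mem_image, Finset.mem_range] at hk
    obtain ⟨a, _, rfl⟩ := hk; omega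
  have hm₂ : ∀ k ∈ s₂, 0 ≤ k ∧ k < d := by
    intro k hk; simp only [hs₂def, Finset.mem_image, Finset.mem_range] at hk
    obtain ⟨a, ha, rfl⟩ := hk; omega
  have hm₃ : ∀ k ∈ s₃, (d:ℤ) ≤ k := by
    intro k hk; simp only [hs₃def, Finset.mem_image, Finset.mem_range] at hk
    obtain ⟨a, _, rfl⟩ := hk; omega
  have hdisj12 : Disjoint s₁ s₂ := by
    rw [Finset.disjoint_left]
    intro k h1 h2
    exact absurd (hm₂ k h2).1 (by simpa using hm₁ k h1)
  have hdisj123 : Disjoint (s₁ ∪ s₂) s₃ := by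
    rw [Finset.disjoint_left]
    intro k h1 h3
    have h3' := hm₃ k h3
    rcases Finset.mem_union.mp h1 with h | h
    · exact absurd h3' (by have := hm₁ k h; omega)
    · exact absurd h3' (by have := (hm₂ k h).2; omega)
  have hsupp : Function.support φ ⊆ ↑(s₁ ∪ s₂ ∪ s₃) := by
    intro k hk
    have hk1 : f (k - d) ≠ 0 := by
      intro h; apply hk; simp [hφ, h]
    have hk2 : f (-1 - k) ≠ 0 := by
      intro h; apply hk; simp [hφ, h]
    have hb1 : k - d ≤ n := by by_contra h; exact hk1 (hfn _ (by omega))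
    have hb2 : -1 - k ≤ n := by by_contra h; exact hk2 (hfn _ (by omega))
    simp only [Finset.coe_union, Set.mem_union, Finset.mem_coe, hs₁def, hs₂def, hs₃def,
      Finset.mem_image, Finset.mem_range]
    rcases lt_trichotomy k 0 with h | h | h
    · exact Or.inl (Or.inl ⟨(-1 - k).toNat, by omega, by omega⟩)
    · rcases lt_or_ge k d with h' | h'
      · exact Or.inl (Or.inr ⟨k.toNat, by omega, by omega⟩)
      · exact Or.inr ⟨(k - d).toNat, by omega, by omega⟩
    · rcases lt_or_ge k d with h' | h'
      · exact Or.inl (Or.inr ⟨k.toNat, by omega, by omega⟩)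
      · exact Or.inr ⟨(k - d).toNat, by omega, by omega⟩
  have hterm : ∀ k : ℤ, (-1:ℚ) ^ k * g (giventalUntwistedField d f k) (f (-1 - k)) = c * φ k := by
    intro k
    simp only [giventalUntwistedField, map_smul, LinearMap.smul_apply, smul_eq_mul, hφ, ← hc]
    ring
  have hLHS : giventalForm g (giventalUntwistedField d f) f = c * ∑ k ∈ s₁ ∪ s₂ ∪ s₃, φ k := by
    rw [giventalForm]
    have : ∀ k : ℤ, (-1:ℚ) ^ k * g (giventalUntwistedField d f k) (f (-1 - k)) = c * φ k :=
      hterm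
    rw [finsum_congr this, finsum_eq_sum_of_support_subset _ (by
      intro k hk
      refine hsupp ?_
      simp only [Function.mem_support] at hk ⊢
      intro h0
      exact hk (by rw [h0, mul_zero])), Finset.mul_sum]
  rw [hLHS]
  by_cases hcz : c = 0
  · rw [hcz]; ring
  -- d is odd
  have hodd : Odd d := by
    by_contra hoddc
    rw [Nat.not_odd_iff_even] at hoddc
    apply hcz
    rw [hc, bernoulli_eq_bernoulli'_of_ne_one (by omega),
      bernoulli'_eq_zero_of_odd (by simpa using hoddc.add_one) (by omega)]
    simp
  have hdet : G.det ≠ 0 := auxDet g hsymm hnondeg b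
  have hinv : G⁻¹ * G = 1 := Matrix.nonsing_inv_mul G (isUnit_iff_ne_zero.mpr hdet)
  -- the three partial sums
  set QQ : ℚ := ∑ a ∈ Finset.range (n+1), (-1:ℚ)^(a+d) * g (f (-1 - ((a+d : ℕ):ℤ))) (f a)
    with hQQ
  set MM : ℚ := ∑ a ∈ Finset.range d, (-1:ℚ)^a * g (f (-1 - (a:ℤ))) (f ((a:ℤ) - d)) with hMM
  have hinj₁ : ∀ a ∈ Finset.range (n+1), ∀ a' ∈ Finset.range (n+1),
      (-1:ℤ) - a = -1 - a' → a = a' := fun a _ a' _ h => by omega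
  have hinj₂ : ∀ a ∈ Finset.range d, ∀ a' ∈ Finset.range d, (a:ℤ) = (a':ℤ) → a = a' :=
    fun a _ a' _ h => by omega
  have hinj₃ : ∀ a ∈ Finset.range (n+1), ∀ a' ∈ Finset.range (n+1),
      (a:ℤ) + d = (a':ℤ) + d → a = a' := fun a _ a' _ h => by omega
  have hE1 : ∑ k ∈ s₁, φ k = QQ := by
    rw [hs₁def, Finset.sum_image hinj₁, hQQ]
    refine Finset.sum_congr rfl fun a _ => ?_
    simp only [hφ]
    rw [aux_zpow_neg_one a,
      show ((-1:ℤ) - a) - d = -1 - ((a+d : ℕ):ℤ) by push_cast; ring,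
      show (-1:ℤ) - (-1 - a) = (a:ℤ) by ring]
    have : (-1:ℚ)^(a+1) = (-1:ℚ)^(a+d) := by
      rw [pow_add, pow_add, hodd.neg_one_pow, pow_one]
    rw [this]
  have hE3 : ∑ k ∈ s₃, φ k = QQ := by
    rw [hs₃def, Finset.sum_image hinj₃, hQQ]
    refine Finset.sum_congr rfl fun a _ => ?_
    simp only [hφ]
    rw [show ((a:ℤ) + d) - d = (a:ℤ) by ring,
      show (-1:ℤ) - ((a:ℤ) + d) = -1 - ((a+d : ℕ):ℤ) by push_cast; ring,
      show (-1:ℚ) ^ ((a:ℤ) + d) = (-1:ℚ)^(a+d) by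
        rw [show ((a:ℤ) + d) = ((a+d : ℕ):ℤ) by push_cast; ring, zpow_natCast],
      hsymm (f a)]
  have hE2 : ∑ k ∈ s₂, φ k = MM := by
    rw [hs₂def, Finset.sum_image hinj₂, hMM]
    refine Finset.sum_congr rfl fun a _ => ?_
    simp only [hφ]
    rw [zpow_natCast, hsymm (f ((a:ℤ) - d))]
  -- the q-p finsum
  have hQsum : (∑ᶠ a : ℕ, ∑ μ : ι, qCoord b f a μ * pCoord g b f (a + d) μ) = -QQ := by
    have hsupQ : Function.support (fun a : ℕ => ∑ μ : ι, qCoord b f a μ * pCoord g b f (a + d) μ)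
        ⊆ ↑(Finset.range (n+1)) := by
      intro a ha
      simp only [Finset.coe_range, Set.mem_Iio]
      by_contra h
      apply ha
      have hfa : f a = 0 := hfn a (by omega)
      simp [qCoord, hfa]
    rw [finsum_eq_sum_of_support_subset _ hsupQ, hQQ, ← Finset.sum_neg_distrib]
    refine Finset.sum_congr rfl fun a _ => ?_
    simp only [qCoord, pCoord]
    rw [show ∑ μ : ι, (b.repr (f a)) μ * ((-1:ℚ) ^ (a + d + 1) * g (f (-1 - ((a+d:ℕ):ℤ))) (b μ))
        = (-1:ℚ) ^ (a + d + 1) * ∑ μ : ι, (b.repr (f a)) μ * g (f (-1 - ((a+d:ℕ):ℤ))) (b μ) by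
          rw [Finset.mul_sum]; exact Finset.sum_congr rfl fun μ _ => by ring,
      auxA g b (f a) (f (-1 - ((a+d:ℕ):ℤ))), pow_succ]
    ring
  -- the p-p double sum
  have hPsum : (∑ a ∈ Finset.range d, ∑ μ : ι, ∑ μ' : ι,
      (-1 : ℚ) ^ (d - 1 - a) * (G⁻¹ μ μ') *
        pCoord g b f a μ * pCoord g b f (d - 1 - a) μ') = MM := by
    rw [hMM]
    refine Finset.sum_congr rfl fun a ha => ?_
    have had : a < d := Finset.mem_range.mp ha
    set e : ℕ := d - 1 - a with he
    have hfe : f (-1 - (e:ℤ)) = f ((a:ℤ) - d) := by congr 1; omega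
    simp only [pCoord]
    rw [show (∑ μ : ι, ∑ μ' : ι, (-1:ℚ) ^ e * (G⁻¹ μ μ') *
          ((-1:ℚ) ^ (a + 1) * g (f (-1 - (a:ℤ))) (b μ)) *
          ((-1:ℚ) ^ (e + 1) * g (f (-1 - (e:ℤ))) (b μ')))
        = ((-1:ℚ) ^ e * (-1:ℚ) ^ (a+1) * (-1:ℚ) ^ (e+1)) *
          ∑ μ : ι, ∑ μ' : ι, (G⁻¹ μ μ') * g (f (-1 - (a:ℤ))) (b μ) * g (f (-1 - (e:ℤ))) (b μ') by
        rw [Finset.mul_sum]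
        refine Finset.sum_congr rfl fun μ _ => ?_
        rw [Finset.mul_sum]
        exact Finset.sum_congr rfl fun μ' _ => by ring,
      auxB g hsymm b G rfl hinv, hfe]
    have hsign : (-1:ℚ) ^ e * (-1:ℚ) ^ (a+1) * (-1:ℚ) ^ (e+1) = (-1:ℚ) ^ a := by
      rw [← pow_add, ← pow_add, show e + (a + 1) + (e + 1) = a + 2 * (e + 1) by ring,
        pow_add, pow_mul, neg_one_sq, one_pow, mul_one]
    rw [hsign]
  rw [hQsum, hPsum, Finset.sum_union hdisj123, Finset.sum_union hdisj12, hE1, hE2, hE3]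
  ring
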